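/- Let K ⊆ L ⊆ M be a tower of fields with K a perfect field. If the polynomial composites K + X·L[X] and L + X·M[X] are both Noetherian rings, then K ⊆ M is a separable field extension and K + X·M[X] is a Noetherian ring. -/

import Mathlib

/-- The polynomial composite `A + X·B[X]`: the subring of `B[X]` of polynomials
whose constant coefficient lies in `A`. -/
def Subring.composite {B : Type*} [CommRing B] (A : Subring B) : Subring (Polynomial B) where
  carrier := {f : Polynomial B | f.coeff 0 ∈ A}
  mul_mem' {f g} hf hg := by
    simp only [Set.mem_setOf_eq, Polynomial.mul_coeff_zero] at *
    exact mul_mem hf hg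
  one_mem' := by
    simp only [Set.mem_setOf_eq, Polynomial.coeff_one_zero]
    exact one_mem A
  add_mem' {f g} hf hg := by
    simp only [Set.mem_setOf_eq, Polynomial.coeff_add] at *
    exact add_mem hf hg
  zero_mem' := by
    simp only [Set.mem_setOf_eq, Polynomial.coeff_zero]
    exact zero_mem A
  neg_mem' {f} hf := by
    simp only [Set.mem_setOf_eq, Polynomial.coeff_neg] at *
    exact neg_mem hf

theorem Subring.mem_composite {B : Type*} [CommRing B] (A : Subring B) (f : Polynomial B) :
    f ∈ A.composite ↔ f.coeff 0 ∈ A := Iff.rfl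

open Polynomial in
lemma finite_of_composite_noetherian (K L : Type*) [Field K] [Field L] [Algebra K L]
    (h : IsNoetherianRing ((algebraMap K L).range.composite)) : Module.Finite K L := by
  haveI := h
  set R := (algebraMap K L).range.composite with hR
  -- the ideal of polynomials with zero constant term
  let I : Ideal R :=
    { carrier := {f | (f : L[X]).coeff 0 = 0}
      add_mem' := fun {a b} ha hb => by
        simp only [Set.mem_setOf_eq] at *
        change ((a : L[X]) + (b : L[X])).coeff 0 = 0
        simp [ha, hb]
      zero_mem' := by simp [Set.mem_setOf_eq]
      smul_mem' := fun c x hx => by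
        simp only [Set.mem_setOf_eq] at *
        change ((c : L[X]) * (x : L[X])).coeff 0 = 0
        simp [Polynomial.mul_coeff_zero, hx] }
  obtain ⟨s, hs⟩ : I.FG := IsNoetherian.noetherian I
  classical
  rw [Module.finite_def]
  refine ⟨s.image (fun f : ↥R => Polynomial.coeff (f : L[X]) 1), ?_⟩
  rw [eq_top_iff]
  rintro c -
  have hXc : (X * C c : L[X]) ∈ R := by
    rw [Subring.mem_composite]
    simp
  have hmem : (⟨X * C c, hXc⟩ : R) ∈ I := by
    show ((X * C c : L[X])).coeff 0 = 0
    simp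
  rw [← hs] at hmem
  obtain ⟨g, -, hg⟩ := Submodule.mem_span_finset.mp hmem
  have hcoe := congrArg (fun q : R => (q : L[X]).coeff 1) hg
  simp only at hcoe
  have hsum : ((∑ i ∈ s, g i • i : R) : L[X]) = ∑ i ∈ s, (g i : L[X]) * (i : L[X]) := by
    have := map_sum R.subtype (fun i => g i • i) s
    rw [show (R.subtype (∑ i ∈ s, g i • i)) = ((∑ i ∈ s, g i • i : R) : L[X]) from rfl] at this
    rw [this]
    exact Finset.sum_congr rfl fun i _ => rfl
  rw [hsum] at hcoe
  have hcoe1 : (∑ i ∈ s, (g i : L[X]) * (i : L[X])).coeff 1 = c := by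
    rw [hcoe]; simp
  rw [Polynomial.finset_sum_coeff] at hcoe1
  have key : ∀ i ∈ s, ((g i : L[X]) * (i : L[X])).coeff 1
      = (g i : L[X]).coeff 0 * (i : L[X]).coeff 1 := by
    intro i hi
    have hiI : i ∈ I := by
      have h' : i ∈ Ideal.span (↑s : Set ↥R) := Ideal.subset_span (Finset.mem_coe.mpr hi)
      rwa [hs] at h'
    have hi0 : (i : L[X]).coeff 0 = 0 := hiI
    have hXd : X * (i : L[X]).divX = (i : L[X]) := by
      have h3 := Polynomial.X_mul_divX_add (i : L[X])
      rwa [hi0, map_zero, add_zero] at h3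
    conv_lhs => rw [← hXd]
    rw [show (g i : L[X]) * (X * (i : L[X]).divX) = X * ((g i : L[X]) * (i : L[X]).divX) by ring,
      Polynomial.coeff_X_mul, Polynomial.mul_coeff_zero]
    congr 1
  rw [Finset.sum_congr rfl key] at hcoe1
  rw [← hcoe1]
  apply Submodule.sum_mem
  intro i hi
  obtain ⟨k, hk⟩ := (g i).2
  rw [← hk, ← Algebra.smul_def]
  exact Submodule.smul_mem _ _ (Submodule.subset_span (Finset.mem_coe.mpr
    (Finset.mem_image_of_mem _ hi)))

section CompositeAux
open Polynomial

/-- The composite as a `K`-subalgebra of `M[X]`. -/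
def compositeAlg (K M : Type*) [Field K] [Field M] [Algebra K M] : Subalgebra K M[X] where
  toSubsemiring := ((algebraMap K M).range.composite).toSubsemiring
  algebraMap_mem' := fun k => by
    show _ ∈ (algebraMap K M).range.composite
    rw [Subring.mem_composite]
    exact ⟨k, by simp [Polynomial.algebraMap_apply]⟩

lemma compositeAlg_toSubring (K M : Type*) [Field K] [Field M] [Algebra K M] :
    (compositeAlg K M).toSubring = (algebraMap K M).range.composite :=
  SetLike.ext fun _ => Iff.rfl

lemma composite_noetherian_of_finite (K M : Type*) [Field K] [Field M] [Algebra K M]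
    [Module.Finite K M] : IsNoetherianRing ((algebraMap K M).range.composite) := by
  classical
  obtain ⟨s, hs⟩ := Module.finite_def.mp ‹Module.Finite K M›
  set gens : Set M[X] := (fun c : M => X * C c) '' ↑s with hgens
  have hXC : ∀ c : M, X * C c ∈ Algebra.adjoin K gens := by
    intro c
    let N : Submodule K M :=
      { carrier := {c | X * C c ∈ Algebra.adjoin K gens}
        add_mem' := fun {a b} ha hb => by
          simp only [Set.mem_setOf_eq] at *
          rw [map_add, mul_add]
          exact add_mem ha hb
        zero_mem' := by
          have h0 : X * C (0:M) ∈ Algebra.adjoin K gens := by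
            rw [map_zero, mul_zero]; exact zero_mem _
          simpa using h0
        smul_mem' := fun k c hc => by
          simp only [Set.mem_setOf_eq] at *
          rw [Algebra.smul_def, Polynomial.C_mul, ← Polynomial.algebraMap_apply,
            mul_left_comm]
          exact mul_mem (Subalgebra.algebraMap_mem _ k) hc }
    have : (↑s : Set M) ⊆ N := fun c hc => Algebra.subset_adjoin ⟨c, hc, rfl⟩
    have h2 : Submodule.span K ↑s ≤ N := Submodule.span_le.mpr this
    rw [hs] at h2
    exact h2 Submodule.mem_top
  have hXmul : ∀ g : M[X], X * g ∈ Algebra.adjoin K gens := by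
    intro g
    induction g using Polynomial.induction_on' with
    | add p q hp hq => rw [mul_add]; exact add_mem hp hq
    | monomial n c =>
      induction n with
      | zero => simpa [Polynomial.monomial_zero_left] using hXC c
      | succ n ih =>
        have heq : X * (monomial (n + 1)) c = (X * C 1) * (X * (monomial n) c) := by
          rw [mul_mul_mul_comm, ← Polynomial.X_mul_monomial]
          ring_nf
          rw [Polynomial.C_1, mul_one]
        rw [heq]
        exact mul_mem (hXC 1) ih
  have hle : (algebraMap K M).range.composite ≤ (Algebra.adjoin K gens).toSubring := by
    intro f hf
    rw [Subring.mem_composite] at hf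
    obtain ⟨k, hk⟩ := hf
    have : f = X * f.divX + C (f.coeff 0) := (Polynomial.X_mul_divX_add f).symm
    rw [this]
    refine add_mem (hXmul f.divX) ?_
    rw [← hk, ← Polynomial.algebraMap_apply]
    exact Subalgebra.algebraMap_mem _ k
  have hge : Algebra.adjoin K gens ≤ compositeAlg K M := by
    rw [Algebra.adjoin_le_iff]
    rintro _ ⟨c, -, rfl⟩
    show X * C c ∈ (algebraMap K M).range.composite
    rw [Subring.mem_composite]
    exact ⟨0, by simp⟩
  have heq : Algebra.adjoin K gens = compositeAlg K M := le_antisymm hge (fun f hf => hle hf)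
  have hfg : (Algebra.adjoin K gens).FG := ⟨s.image (fun c => X * C c), by
    rw [Finset.coe_image]⟩
  haveI : Algebra.FiniteType K (Algebra.adjoin K gens) :=
    (Subalgebra.fg_iff_finiteType _).mp hfg
  haveI hN : IsNoetherianRing (Algebra.adjoin K gens) :=
    Algebra.FiniteType.isNoetherianRing K _
  rw [← compositeAlg_toSubring, ← heq]
  exact hN

end CompositeAux

/-- For a tower of fields `K ⊆ L ⊆ M` with `K` perfect: if `K + X·L[X]` and `L + X·M[X]` are
Noetherian, then `K ⊆ M` is a separable extension and `K + X·M[X]` is Noetherian. -/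
theorem composite_tower_separable (K L M : Type*) [Field K] [Field L] [Field M]
    [Algebra K L] [Algebra L M] [Algebra K M] [IsScalarTower K L M] [PerfectField K]
    (h1 : IsNoetherianRing ((algebraMap K L).range.composite))
    (h2 : IsNoetherianRing ((algebraMap L M).range.composite)) :
    Algebra.IsSeparable K M ∧ IsNoetherianRing ((algebraMap K M).range.composite) := by
  have hKL : Module.Finite K L := finite_of_composite_noetherian K L h1
  have hLM : Module.Finite L M := finite_of_composite_noetherian L M h2
  haveI := hKL; haveI := hLM
  haveI hKM : Module.Finite K M := Module.Finite.trans L M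
  haveI : Algebra.IsAlgebraic K M := Algebra.IsAlgebraic.of_finite K M
  exact ⟨inferInstance, composite_noetherian_of_finite K M⟩
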